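/- Let (X, d) be a metric space, let n ≥ 8 be an integer, let S ⊆ X be nonempty, let t₀ > 0 and set t_l = 4^{−l}·t₀ for each positive integer l. For each l ≥ 1 let S^{(l)} be a finite subset of S such that for every q ∈ S there exists p ∈ S^{(l)} with d(p, q) ≤ 2√t_l. Let ζ : (0,∞) → ℝ be nonnegative with ζ(t) ≥ (2/(n−3))·t^{(3−n)/2} for all t ∈ (0, t₀]. Let x ∈ X with 0 < d(x, S) < (1/4)√t₀, and suppose the family of nonnegative terms t_l^{(n−5)/2}·ζ(d(p,x)²), indexed by pairs (l, p) with l ≥ 1 and p ∈ S^{(l)}, is summable with sum Ψ(x). Then Ψ(x) ≥ (1/(2(n−3)))·3^{3−n}·d(x, S)^{−2}. -/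
import Mathlib


private lemma aux11 (m : ℝ) (hm : 8 ≤ m) (d s D : ℝ) (hd : 0 < d) (hs : 0 < s)
    (hD0 : 0 < D) (hD3 : D ≤ 3 * s) (hD6 : D ≤ 6 * d) :
    1 / (2 * (m - 3)) * (3 : ℝ) ^ ((3 : ℝ) - m) * d ^ (-2 : ℝ)
      ≤ (s ^ 2) ^ ((m - 5) / 2) * (2 / (m - 3) * (D ^ 2) ^ (((3 : ℝ) - m) / 2)) := by
  have hm3 : (0:ℝ) < m - 3 := by linarith
  have hm5 : (0:ℝ) ≤ m - 5 := by linarith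
  have e1 : ((s ^ 2 : ℝ)) ^ ((m - 5) / 2) = s ^ (m - 5) := by
    rw [← Real.rpow_natCast s 2, ← Real.rpow_mul hs.le]
    congr 1; ring
  have e2 : ((D ^ 2 : ℝ)) ^ (((3:ℝ) - m) / 2) = D ^ ((3:ℝ) - m) := by
    rw [← Real.rpow_natCast D 2, ← Real.rpow_mul hD0.le]
    congr 1; ring
  rw [e1, e2]
  have h1 : (D / 3 : ℝ) ^ (m - 5) ≤ s ^ (m - 5) :=
    Real.rpow_le_rpow (by positivity) (by linarith) hm5
  have step1 : (D / 3) ^ (m - 5) * (2 / (m - 3) * D ^ ((3:ℝ) - m))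
      ≤ s ^ (m - 5) * (2 / (m - 3) * D ^ ((3:ℝ) - m)) := by
    apply mul_le_mul_of_nonneg_right h1
    positivity
  refine le_trans ?_ step1
  have e3 : (D / 3 : ℝ) ^ (m - 5) = D ^ (m - 5) / (3:ℝ) ^ (m - 5) :=
    Real.div_rpow hD0.le (by norm_num) _
  have e4 : D ^ (m - 5) * D ^ ((3:ℝ) - m) = (D ^ 2)⁻¹ := by
    rw [← Real.rpow_add hD0, show (m - 5) + ((3:ℝ) - m) = -2 by ring,
      Real.rpow_neg hD0.le, show (2:ℝ) = ((2:ℕ):ℝ) by norm_num, Real.rpow_natCast]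
  have e6 : d ^ (-2:ℝ) = (d ^ 2)⁻¹ := by
    rw [Real.rpow_neg hd.le, show (2:ℝ) = ((2:ℕ):ℝ) by norm_num, Real.rpow_natCast]
  have e7 : (3:ℝ) ^ ((3:ℝ) - m) = ((3:ℝ) ^ (m - 5))⁻¹ / 9 := by
    rw [show (3:ℝ) - m = -(m-5) + -2 by ring, Real.rpow_add (by norm_num : (0:ℝ) < 3),
        Real.rpow_neg (by norm_num : (0:ℝ) ≤ 3) (m-5),
        show (-2:ℝ) = ((-2:ℤ):ℝ) by norm_num, Real.rpow_intCast]
    norm_num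
    ring
  rw [e3, e6, e7]
  have e8 : D ^ (m - 5) / (3:ℝ) ^ (m - 5) * (2 / (m - 3) * D ^ ((3:ℝ) - m))
      = 2 / (m - 3) * ((3:ℝ) ^ (m - 5))⁻¹ * (D ^ 2)⁻¹ := by
    rw [div_eq_mul_inv]
    calc D ^ (m-5) * ((3:ℝ)^(m-5))⁻¹ * (2/(m-3) * D ^ ((3:ℝ)-m))
        = 2/(m-3) * ((3:ℝ)^(m-5))⁻¹ * (D^(m-5) * D^((3:ℝ)-m)) := by ring
      _ = 2/(m-3) * ((3:ℝ)^(m-5))⁻¹ * (D^2)⁻¹ := by rw [e4]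
  rw [e8]
  have hR : (0:ℝ) < (3:ℝ) ^ (m - 5) := Real.rpow_pos_of_pos (by norm_num) _
  have hD2 : D ^ 2 ≤ 36 * d ^ 2 := by nlinarith
  have hinv : (36 * d ^ 2)⁻¹ ≤ (D ^ 2)⁻¹ := by
    apply inv_anti₀ (by positivity) hD2
  calc 1 / (2*(m-3)) * (((3:ℝ)^(m-5))⁻¹ / 9) * (d^2)⁻¹
      = 2/(m-3) * ((3:ℝ)^(m-5))⁻¹ * (36 * d^2)⁻¹ := by
        field_simp
        ring
    _ ≤ 2/(m-3) * ((3:ℝ)^(m-5))⁻¹ * (D^2)⁻¹ := by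
        apply mul_le_mul_of_nonneg_left hinv (by positivity)


set_option maxHeartbeats 1000000 in
/-- Let `(X, d)` be a metric space, `n ≥ 8` an integer, `S ⊆ X` nonempty,
`t₀ > 0`, `t_l = 4^{−l}·t₀`. For each `l ≥ 1` let `S^{(l)}` be a finite subset of `S` such
that every `q ∈ S` has some `p ∈ S^{(l)}` with `d(p, q) ≤ 2√t_l`. Let `ζ : (0,∞) → ℝ` be
nonnegative with `ζ(t) ≥ (2/(n−3))·t^{(3−n)/2}` for `t ∈ (0, t₀]`. Let `x ∈ X` with
`0 < d(x, S) < (1/4)√t₀`, and suppose the family of nonnegative terms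
`t_l^{(n−5)/2}·ζ(d(p,x)²)`, indexed by pairs `(l, p)` with `l ≥ 1`, `p ∈ S^{(l)}`, is
summable with sum `Ψ(x)`. Then `Ψ(x) ≥ (1/(2(n−3)))·3^{3−n}·d(x, S)^{−2}`. -/
theorem stmt_11 {X : Type*} [MetricSpace X] (n : ℕ) (hn : 8 ≤ n)
    (S : Set X) (hS : S.Nonempty) (t₀ : ℝ) (ht₀ : 0 < t₀)
    (t : ℕ → ℝ) (ht : ∀ l : ℕ, 1 ≤ l → t l = (4 : ℝ) ^ (-(l : ℝ)) * t₀)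
    (S' : ℕ → Finset X) (hsub : ∀ l : ℕ, 1 ≤ l → ↑(S' l) ⊆ S)
    (hnet : ∀ l : ℕ, 1 ≤ l → ∀ q ∈ S, ∃ p ∈ S' l, dist p q ≤ 2 * Real.sqrt (t l))
    (ζ : ℝ → ℝ) (hζ0 : ∀ s : ℝ, 0 < s → 0 ≤ ζ s)
    (hζ : ∀ s : ℝ, 0 < s → s ≤ t₀ → (2 / ((n : ℝ) - 3)) * s ^ (((3 : ℝ) - n) / 2) ≤ ζ s)
    (x : X) (hx0 : 0 < Metric.infDist x S)
    (hx1 : Metric.infDist x S < (1 / 4) * Real.sqrt t₀)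
    (Ψx : ℝ)
    (hΨ : HasSum (fun lp : Σ l : ℕ, {p : X // p ∈ S' (l + 1)} =>
      t (lp.1 + 1) ^ (((n : ℝ) - 5) / 2) * ζ (dist (lp.2 : X) x ^ 2)) Ψx) :
    (1 / (2 * ((n : ℝ) - 3))) * (3 : ℝ) ^ ((3 : ℝ) - n) * Metric.infDist x S ^ (-2 : ℝ)
      ≤ Ψx := by
  have hT0 : 0 < Real.sqrt t₀ := Real.sqrt_pos.mpr ht₀
  set T := Real.sqrt t₀ with hTdef
  set d := Metric.infDist x S with hddef
  have hd4 : d < T / 4 := by linarith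
  set δ := min (d / 6) (T / 4 - d) with hδdef
  have hδ0 : 0 < δ := lt_min (by linarith) (by linarith)
  have hδ6 : δ ≤ d / 6 := min_le_left _ _
  have hδT : δ ≤ T / 4 - d := min_le_right _ _
  set c := d + δ with hcdef
  have hc0 : 0 < c := by positivity
  have hcd : d < c := by simp [hcdef]; linarith
  have hc2 : c ≤ 7 / 6 * d := by simp [hcdef]; linarith
  have hc3 : c ≤ T / 4 := by simp [hcdef]; linarith
  -- choose the scale
  obtain ⟨k, hks, hs2c, hsT⟩ :
      ∃ k : ℕ, c ≤ T / 2 ^ (k + 1) ∧ T / 2 ^ (k + 1) < 2 * c ∧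
        c + 2 * (T / 2 ^ (k + 1)) ≤ T := by
    by_cases hcase : c ≤ T / 5
    · have hr5 : (5:ℝ) ≤ T / c := by rw [le_div_iff₀ hc0]; linarith
      have hr0 : (0:ℝ) < T / c := by positivity
      have hlog1 : ((2:ℕ):ℝ) ^ (Int.log 2 (T / c)) ≤ T / c :=
        Int.zpow_log_le_self (by norm_num) hr0
      have hlog2 : T / c < ((2:ℕ):ℝ) ^ (Int.log 2 (T / c) + 1) :=
        Int.lt_zpow_succ_log_self (by norm_num) _
      set j := Int.log 2 (T / c) with hjdef
      have hj2 : 2 ≤ j := by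
        by_contra hcon
        push_neg at hcon
        have h1 : j + 1 ≤ 2 := by omega
        have h2 : ((2:ℕ):ℝ) ^ (j+1) ≤ ((2:ℕ):ℝ) ^ (2:ℤ) :=
          zpow_le_zpow_right₀ (by norm_num) h1
        have : T / c < ((2:ℕ):ℝ) ^ (2:ℤ) := lt_of_lt_of_le hlog2 h2
        norm_num at this
        linarith
      have hpow : ((2:ℝ)) ^ (j.toNat - 1 + 1) = ((2:ℕ):ℝ) ^ (j:ℤ) := by
        rw [show ((2:ℕ):ℝ) = (2:ℝ) by norm_num, ← zpow_natCast (2:ℝ),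
            show ((j.toNat - 1 + 1 : ℕ):ℤ) = j by omega]
      have hE0 : (0:ℝ) < (2:ℝ) ^ (j.toNat - 1 + 1) := by positivity
      have hle : (2:ℝ) ^ (j.toNat - 1 + 1) * c ≤ T := by
        have h := hlog1
        rw [← hpow, le_div_iff₀ hc0] at h
        exact h
      have hlt : T < 2 * c * (2:ℝ) ^ (j.toNat - 1 + 1) := by
        have h2 : ((2:ℕ):ℝ) ^ (j + 1) = 2 * ((2:ℕ):ℝ) ^ (j:ℤ) := by
          rw [zpow_add_one₀ (by norm_num)]; push_cast; ring
        have h := hlog2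
        rw [h2, ← hpow, div_lt_iff₀ hc0] at h
        nlinarith
      refine ⟨j.toNat - 1, ?_, ?_, ?_⟩
      · rw [le_div_iff₀ hE0]; nlinarith
      · rw [div_lt_iff₀ hE0]; linarith
      · have h3 : T / 2 ^ (j.toNat - 1 + 1) < 2 * c := by rw [div_lt_iff₀ hE0]; linarith
        linarith
    · push_neg at hcase
      refine ⟨1, ?_, ?_, ?_⟩
      · norm_num; linarith
      · norm_num; rw [div_lt_iff₀ (by norm_num : (0:ℝ) < 4)]; linarith
      · norm_num; linarith
  set s := T / 2 ^ (k + 1) with hsdef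
  have hs0 : 0 < s := by positivity
  have htk : t (k + 1) = s ^ 2 := by
    rw [ht (k + 1) (Nat.le_add_left 1 k)]
    have h4 : (4:ℝ) ^ (-(((k+1:ℕ)):ℝ)) = ((4:ℝ) ^ (k+1))⁻¹ := by
      rw [Real.rpow_neg (by norm_num), Real.rpow_natCast]
    have h24 : ((2:ℝ) ^ (k+1)) ^ 2 = (4:ℝ) ^ (k+1) := by
      rw [show (4:ℝ) = 2 ^ 2 by norm_num, ← pow_mul, ← pow_mul, mul_comm]
    have hTT : T ^ 2 = t₀ := Real.sq_sqrt ht₀.le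
    rw [h4, hsdef, div_pow, hTT, h24]
    field_simp
  have hsqrt : Real.sqrt (t (k + 1)) = s := by rw [htk, Real.sqrt_sq hs0.le]
  -- pick a nearby point of S and the net point
  have hcd' : Metric.infDist x S < c := by rw [← hddef]; exact hcd
  obtain ⟨q, hqS, hxq⟩ := (Metric.infDist_lt_iff hS).mp hcd'
  obtain ⟨p, hp, hpq⟩ := hnet (k + 1) (Nat.le_add_left 1 k) q hqS
  rw [hsqrt] at hpq
  set D := dist p x with hDdef
  have hDd : d ≤ D := by
    have h : Metric.infDist x S ≤ dist x p :=
      Metric.infDist_le_dist_of_mem (hsub (k + 1) (Nat.le_add_left 1 k) hp)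
    rw [← hddef] at h
    rwa [dist_comm] at h
  have hD0 : 0 < D := lt_of_lt_of_le hx0 hDd
  have hDub : D < c + 2 * s := by
    calc D ≤ dist p q + dist q x := dist_triangle p q x
      _ < 2 * s + c := by rw [dist_comm q x]; linarith
      _ = c + 2 * s := by ring
  have hD3s : D ≤ 3 * s := by linarith [hDub, hks]
  have hD6d : D ≤ 6 * d := by linarith [hDub, hs2c, hc2]
  have hDT : D ≤ T := by linarith [hDub, hsT]
  have hD2t₀ : D ^ 2 ≤ t₀ := by
    have h := pow_le_pow_left₀ hD0.le hDT 2
    rwa [hTdef, Real.sq_sqrt ht₀.le] at h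
  -- all terms are nonnegative
  have hpos : ∀ j : Σ l : ℕ, {p : X // p ∈ S' (l + 1)},
      0 ≤ t (j.1 + 1) ^ (((n : ℝ) - 5) / 2) * ζ (dist (j.2 : X) x ^ 2) := by
    intro j
    apply mul_nonneg
    · apply Real.rpow_nonneg
      rw [ht (j.1 + 1) (Nat.le_add_left 1 j.1)]
      positivity
    · apply hζ0
      have hmem : (j.2 : X) ∈ S := hsub (j.1 + 1) (Nat.le_add_left 1 j.1) j.2.2
      have h : Metric.infDist x S ≤ dist x (j.2 : X) :=
        Metric.infDist_le_dist_of_mem hmem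
      rw [← hddef] at h
      rw [dist_comm] at h
      nlinarith
  have hterm : t (k + 1) ^ (((n : ℝ) - 5) / 2) * ζ (D ^ 2) ≤ Ψx :=
    le_hasSum hΨ ⟨k, ⟨p, hp⟩⟩ (fun j _ => hpos j)
  have hmain := aux11 (n : ℝ) (by exact_mod_cast hn) d s D hx0 hs0 hD0 hD3s hD6d
  calc 1 / (2 * ((n:ℝ) - 3)) * (3:ℝ) ^ ((3:ℝ) - n) * d ^ (-2:ℝ)
      ≤ (s ^ 2) ^ (((n:ℝ) - 5) / 2) * (2 / ((n:ℝ) - 3) * (D ^ 2) ^ (((3:ℝ) - n) / 2)) :=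
        hmain
    _ ≤ (s ^ 2) ^ (((n:ℝ) - 5) / 2) * ζ (D ^ 2) := by
        apply mul_le_mul_of_nonneg_left (hζ (D ^ 2) (by positivity) hD2t₀)
        positivity
    _ = t (k + 1) ^ (((n:ℝ) - 5) / 2) * ζ (D ^ 2) := by rw [htk]
    _ ≤ Ψx := hterm
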